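/- Let T > 0, let n_c ≥ 1 be an integer, let α_max ∈ (0,1), and set a = α_max/(T(1 − α_max)). Let ν_1, …, ν_N be nonnegative reals with S = Σ_{j=1}^N ν_j. If S < min{ a / (Σ_{k=0}^{n_c−1} α_max^k), 1 / (T · Σ_{k=1}^{n_c−1} k·α_max^{k−1}) }, then the system of equations x_i = Σ_{j≠i} ν_j · Σ_{k=0}^{n_c−1} (T x_j/(1 + T x_j))^k, for i = 1, …, N, has a unique solution x ∈ [0,a]^N. -/

import Mathlib

/-! Auxiliary definitions for the contraction argument. -/

noncomputable def stmt2clamp (a t : ℝ) : ℝ := max 0 (min t a)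

noncomputable def stmt2φ (T t : ℝ) : ℝ := T * t / (1 + T * t)

noncomputable def stmt2g (T a : ℝ) (nc : ℕ) (t : ℝ) : ℝ :=
  ∑ k ∈ Finset.range nc, (stmt2φ T (stmt2clamp a t)) ^ k

noncomputable def stmt2F (T a : ℝ) (nc N : ℕ) (ν : Fin N → ℝ) (x : Fin N → ℝ) :
    Fin N → ℝ :=
  fun i => ∑ j ∈ Finset.univ.erase i, ν j * stmt2g T a nc (x j)

lemma stmt2clamp_mem {a : ℝ} (ha : 0 ≤ a) (t : ℝ) : stmt2clamp a t ∈ Set.Icc 0 a :=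
  ⟨le_max_left _ _, max_le ha (min_le_right _ _)⟩

lemma stmt2clamp_eq {a t : ℝ} (ht : t ∈ Set.Icc 0 a) : stmt2clamp a t = t := by
  unfold stmt2clamp
  rw [min_eq_left ht.2, max_eq_right ht.1]

lemma stmt2clamp_lip (a s t : ℝ) : |stmt2clamp a s - stmt2clamp a t| ≤ |s - t| := by
  unfold stmt2clamp
  rw [max_comm 0 (min s a), max_comm 0 (min t a)]
  refine (abs_max_sub_max_le_abs _ _ _).trans ?_
  refine (abs_min_sub_min_le_max s a t a).trans ?_
  simp

lemma stmt2φ_nonneg {T t : ℝ} (hT : 0 < T) (ht : 0 ≤ t) : 0 ≤ stmt2φ T t := by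
  unfold stmt2φ
  have : 0 < 1 + T * t := by nlinarith
  positivity

lemma stmt2φ_le {T t α a : ℝ} (hT : 0 < T) (hα0 : 0 < α) (hα1 : α < 1)
    (ha : a = α / (T * (1 - α))) (ht : t ∈ Set.Icc 0 a) : stmt2φ T t ≤ α := by
  have h1 : 0 < 1 + T * t := by nlinarith [ht.1]
  have h2 : t * (T * (1 - α)) ≤ α := by
    have := ht.2
    rw [ha, le_div_iff₀ (by nlinarith)] at this
    exact this
  unfold stmt2φ
  rw [div_le_iff₀ h1]
  nlinarith

lemma stmt2φ_lip {T s t : ℝ} (hT : 0 < T) (hs : 0 ≤ s) (ht : 0 ≤ t) :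
    |stmt2φ T s - stmt2φ T t| ≤ T * |s - t| := by
  have h1 : 0 < 1 + T * s := by nlinarith
  have h2 : 0 < 1 + T * t := by nlinarith
  have key : stmt2φ T s - stmt2φ T t = T * (s - t) / ((1 + T * s) * (1 + T * t)) := by
    unfold stmt2φ
    field_simp
    ring
  rw [key, abs_div, abs_mul, abs_of_pos hT, abs_of_pos (mul_pos h1 h2)]
  refine div_le_self (by positivity) ?_
  nlinarith [mul_nonneg (mul_nonneg hT.le hs) (mul_nonneg hT.le ht),
    mul_nonneg hT.le hs, mul_nonneg hT.le ht]

/-- `|u^k - v^k| ≤ k * c^(k-1) * |u - v|` for `|u|, |v| ≤ c`. -/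
lemma stmt2pow_lip {c : ℝ} (k : ℕ) {u v : ℝ} (hu : |u| ≤ c) (hv : |v| ≤ c) :
    |u ^ k - v ^ k| ≤ (k : ℝ) * c ^ (k - 1) * |u - v| := by
  have hc : 0 ≤ c := le_trans (abs_nonneg u) hu
  induction k with
  | zero => simp
  | succ n ih =>
    have key : u ^ (n + 1) - v ^ (n + 1) = u * (u ^ n - v ^ n) + (u - v) * v ^ n := by
      ring
    have hvn : |v ^ n| ≤ c ^ n := by
      rw [abs_pow]; exact pow_le_pow_left₀ (abs_nonneg v) hv n
    calc |u ^ (n + 1) - v ^ (n + 1)|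
        ≤ |u * (u ^ n - v ^ n)| + |(u - v) * v ^ n| := by rw [key]; exact abs_add_le _ _
      _ = |u| * |u ^ n - v ^ n| + |u - v| * |v ^ n| := by rw [abs_mul, abs_mul]
      _ ≤ c * ((n : ℝ) * c ^ (n - 1) * |u - v|) + |u - v| * c ^ n := by
          gcongr
      _ ≤ (↑(n + 1) : ℝ) * c ^ (n + 1 - 1) * |u - v| := by
          have hcn : c * ((n : ℝ) * c ^ (n - 1)) ≤ (n : ℝ) * c ^ n := by
            rcases Nat.eq_zero_or_pos n with h | h
            · simp [h]
            · have : c ^ (n - 1) * c = c ^ n := by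
                rw [← pow_succ]
                congr 1
                omega
              nlinarith [pow_nonneg hc (n - 1)]
          have : (↑(n + 1) : ℝ) * c ^ (n + 1 - 1) = (n : ℝ) * c ^ n + c ^ n := by
            push_cast; ring
          rw [this]
          nlinarith [abs_nonneg (u - v), pow_nonneg hc n]

lemma stmt2g_lip {T α a : ℝ} (hT : 0 < T) (hα0 : 0 < α) (hα1 : α < 1)
    (ha : a = α / (T * (1 - α))) (nc : ℕ) (s t : ℝ) :
    |stmt2g T a nc s - stmt2g T a nc t| ≤
      (T * ∑ k ∈ Finset.range nc, (k : ℝ) * α ^ (k - 1)) * |s - t| := by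
  have ha0 : 0 ≤ a := by
    rw [ha]; exact div_nonneg hα0.le (by nlinarith)
  set cs := stmt2clamp a s with hcs
  set ct := stmt2clamp a t with hct
  have hcsm := stmt2clamp_mem ha0 s
  have hctm := stmt2clamp_mem ha0 t
  have hφs : |stmt2φ T cs| ≤ α :=
    abs_le.2 ⟨by linarith [stmt2φ_nonneg hT hcsm.1], stmt2φ_le hT hα0 hα1 ha hcsm⟩
  have hφt : |stmt2φ T ct| ≤ α :=
    abs_le.2 ⟨by linarith [stmt2φ_nonneg hT hctm.1], stmt2φ_le hT hα0 hα1 ha hctm⟩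
  have hφlip : |stmt2φ T cs - stmt2φ T ct| ≤ T * |s - t| := by
    refine (stmt2φ_lip hT hcsm.1 hctm.1).trans ?_
    have := stmt2clamp_lip a s t
    nlinarith
  unfold stmt2g
  rw [← Finset.sum_sub_distrib]
  refine (Finset.abs_sum_le_sum_abs _ _).trans ?_
  have hstep : ∀ k ∈ Finset.range nc,
      |(stmt2φ T cs) ^ k - (stmt2φ T ct) ^ k| ≤
        (k : ℝ) * α ^ (k - 1) * (T * |s - t|) := by
    intro k _
    refine (stmt2pow_lip k hφs hφt).trans ?_
    have hk : 0 ≤ (k : ℝ) * α ^ (k - 1) :=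
      mul_nonneg (Nat.cast_nonneg k) (pow_nonneg hα0.le _)
    exact mul_le_mul_of_nonneg_left hφlip hk
  refine (Finset.sum_le_sum hstep).trans ?_
  rw [← Finset.sum_mul]
  ring_nf
  exact le_of_eq (by rw [Finset.sum_congr rfl fun (x : ℕ) _ => mul_comm (α ^ (x - 1)) (x : ℝ)]; ring)

lemma stmt2g_mem {T α a : ℝ} (hT : 0 < T) (hα0 : 0 < α) (hα1 : α < 1)
    (ha : a = α / (T * (1 - α))) (nc : ℕ) (t : ℝ) :
    stmt2g T a nc t ∈ Set.Icc 0 (∑ k ∈ Finset.range nc, α ^ k) := by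
  have ha0 : 0 ≤ a := by
    rw [ha]; exact div_nonneg hα0.le (by nlinarith)
  have hm := stmt2clamp_mem ha0 t
  have h0 := stmt2φ_nonneg hT hm.1
  have h1 := stmt2φ_le hT hα0 hα1 ha hm
  constructor
  · exact Finset.sum_nonneg fun k _ => pow_nonneg h0 k
  · exact Finset.sum_le_sum fun k _ => pow_le_pow_left₀ h0 h1 k

/-- Uniqueness of the simplified vector fixed point. With
`a = α_max/(T(1−α_max))`, if the total load `S = ∑_j ν_j` satisfies
`S < min{ a/∑_{k<n_c} α_max^k , 1/(T ∑_{k<n_c} k α_max^{k−1}) }`, then the system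
`x_i = ∑_{j≠i} ν_j ∑_{k<n_c} (T x_j/(1+T x_j))^k` has a unique solution in `[0,a]^N`. -/
theorem stmt2 (T : ℝ) (hT : 0 < T) (nc : ℕ) (hnc : 1 ≤ nc)
    (αmax : ℝ) (hαmax : αmax ∈ Set.Ioo (0 : ℝ) 1)
    (a : ℝ) (ha : a = αmax / (T * (1 - αmax)))
    (N : ℕ) (ν : Fin N → ℝ) (hν : ∀ j, 0 ≤ ν j)
    (hS : (∑ j, ν j) <
      min (a / ∑ k ∈ Finset.range nc, αmax ^ k)
          (1 / (T * ∑ k ∈ Finset.range nc, (k : ℝ) * αmax ^ (k - 1)))) :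
    ∃! x : Fin N → ℝ, (∀ i, x i ∈ Set.Icc (0 : ℝ) a) ∧
      ∀ i : Fin N, x i = ∑ j ∈ Finset.univ.erase i,
        ν j * ∑ k ∈ Finset.range nc, (T * x j / (1 + T * x j)) ^ k := by
  obtain ⟨hα0, hα1⟩ := hαmax
  set S : ℝ := ∑ j, ν j with hSdef
  have hS0 : 0 ≤ S := Finset.sum_nonneg fun j _ => hν j
  set C1 : ℝ := ∑ k ∈ Finset.range nc, αmax ^ k with hC1def
  set C2 : ℝ := ∑ k ∈ Finset.range nc, (k : ℝ) * αmax ^ (k - 1) with hC2def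
  -- nc = 1 gives a contradiction
  rcases Nat.lt_or_ge nc 2 with h2 | h2
  · have hnc1 : nc = 1 := by omega
    have hC2z : C2 = 0 := by simp [hC2def, hnc1]
    have : S < 0 := lt_of_lt_of_le hS (by rw [hC2z]; simp)
    linarith
  -- Main case: nc ≥ 2
  have hC1one : (1 : ℝ) ≤ C1 := by
    have : (αmax : ℝ) ^ 0 ≤ C1 :=
      Finset.single_le_sum (f := fun k => αmax ^ k)
        (fun k _ => pow_nonneg hα0.le k) (Finset.mem_range.2 (show 0 < nc by omega))
    simpa using this
  have hC2one : (1 : ℝ) ≤ C2 := by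
    have : ((1 : ℕ) : ℝ) * αmax ^ (1 - 1) ≤ C2 :=
      Finset.single_le_sum (f := fun k : ℕ => (k : ℝ) * αmax ^ (k - 1))
        (fun (k : ℕ) _ => mul_nonneg (Nat.cast_nonneg k) (pow_nonneg hα0.le _))
        (Finset.mem_range.2 (show 1 < nc by omega))
    simpa using this
  have hC1pos : (0 : ℝ) < C1 := by linarith
  have hC2pos : (0 : ℝ) < C2 := by linarith
  have hSa : S * C1 < a := by
    have h := lt_of_lt_of_le hS (min_le_left _ _)
    exact (lt_div_iff₀ hC1pos).mp h
  have ha0 : 0 ≤ a := by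
    rw [ha]; exact div_nonneg hα0.le (by nlinarith)
  have hK1 : S * (T * C2) < 1 := by
    have h := lt_of_lt_of_le hS (min_le_right _ _)
    have hTC2 : 0 < T * C2 := by positivity
    calc S * (T * C2) < (1 / (T * C2)) * (T * C2) := by
          exact mul_lt_mul_of_pos_right h hTC2
      _ = 1 := by field_simp
  set L : ℝ := T * C2 with hLdef
  have hL0 : 0 ≤ L := by positivity
  set F := stmt2F T a nc N ν with hFdef
  -- F maps everything into [0, a]^N pointwise
  have hFmem : ∀ x : Fin N → ℝ, ∀ i, F x i ∈ Set.Icc (0 : ℝ) a := by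
    intro x i
    constructor
    · exact Finset.sum_nonneg fun j _ =>
        mul_nonneg (hν j) (stmt2g_mem hT hα0 hα1 ha nc (x j)).1
    · have h1 : F x i ≤ ∑ j ∈ Finset.univ.erase i, ν j * C1 :=
        Finset.sum_le_sum fun j _ =>
          mul_le_mul_of_nonneg_left (stmt2g_mem hT hα0 hα1 ha nc (x j)).2 (hν j)
      have h2 : ∑ j ∈ Finset.univ.erase i, ν j * C1 ≤ ∑ j, ν j * C1 :=
        Finset.sum_le_sum_of_subset_of_nonneg (Finset.erase_subset _ _)
          (fun j _ _ => mul_nonneg (hν j) (le_of_lt hC1pos))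
      have h3 : ∑ j, ν j * C1 = S * C1 := by rw [hSdef, Finset.sum_mul]
      linarith
  -- Lipschitz constant
  set K : NNReal := ⟨S * L, mul_nonneg hS0 hL0⟩ with hKdef
  have hKlt : K < 1 := by
    rw [← NNReal.coe_lt_coe]
    exact hK1
  have hlip : LipschitzWith K F := by
    apply LipschitzWith.of_dist_le_mul
    intro x y
    rw [dist_pi_le_iff (by positivity)]
    intro i
    rw [Real.dist_eq]
    have hdecomp : F x i - F y i =
        ∑ j ∈ Finset.univ.erase i, ν j * (stmt2g T a nc (x j) - stmt2g T a nc (y j)) := by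
      rw [hFdef]
      unfold stmt2F
      rw [← Finset.sum_sub_distrib]
      exact Finset.sum_congr rfl fun j _ => by ring
    rw [hdecomp]
    refine (Finset.abs_sum_le_sum_abs _ _).trans ?_
    have hstep : ∀ j ∈ Finset.univ.erase i,
        |ν j * (stmt2g T a nc (x j) - stmt2g T a nc (y j))| ≤
          ν j * (L * dist x y) := by
      intro j _
      rw [abs_mul, abs_of_nonneg (hν j)]
      refine mul_le_mul_of_nonneg_left ?_ (hν j)
      refine (stmt2g_lip hT hα0 hα1 ha nc (x j) (y j)).trans ?_
      have hd : |x j - y j| ≤ dist x y := by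
        rw [← Real.dist_eq]
        exact dist_le_pi_dist x y j
      exact mul_le_mul_of_nonneg_left hd hL0
    refine (Finset.sum_le_sum hstep).trans ?_
    rw [← Finset.sum_mul]
    have hsub : ∑ j ∈ Finset.univ.erase i, ν j ≤ S :=
      Finset.sum_le_sum_of_subset_of_nonneg (Finset.erase_subset _ _)
        (fun j _ _ => hν j)
    have : (K : ℝ) * dist x y = S * (L * dist x y) := by
      show S * L * dist x y = S * (L * dist x y)
      ring
    rw [this]
    exact mul_le_mul_of_nonneg_right hsub (mul_nonneg hL0 dist_nonneg)
  have hcontr : ContractingWith K F := ⟨hKlt, hlip⟩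
  set x0 : Fin N → ℝ := ContractingWith.fixedPoint F hcontr with hx0def
  have hfix : Function.IsFixedPt F x0 := hcontr.fixedPoint_isFixedPt
  have hx0mem : ∀ i, x0 i ∈ Set.Icc (0 : ℝ) a := by
    intro i
    have : x0 i = F x0 i := by rw [hfix]
    rw [this]
    exact hFmem x0 i
  -- For x in [0,a]^N, F agrees with the original map
  have hFeq : ∀ (x : Fin N → ℝ), (∀ i, x i ∈ Set.Icc (0 : ℝ) a) → ∀ i,
      F x i = ∑ j ∈ Finset.univ.erase i,
        ν j * ∑ k ∈ Finset.range nc, (T * x j / (1 + T * x j)) ^ k := by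
    intro x hx i
    rw [hFdef]
    unfold stmt2F
    refine Finset.sum_congr rfl fun j _ => ?_
    congr 1
    unfold stmt2g stmt2φ
    rw [stmt2clamp_eq (hx j)]
  refine ⟨x0, ⟨hx0mem, fun i => ?_⟩, ?_⟩
  · rw [← hFeq x0 hx0mem i]
    exact (congrFun hfix i).symm
  · rintro y ⟨hymem, hyeq⟩
    have hyfix : Function.IsFixedPt F y := by
      funext i
      rw [hFeq y hymem i]
      exact (hyeq i).symm
    exact hcontr.fixedPoint_unique hyfix
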